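/- Let FreeFinℤSet denote the category whose objects are free ℤ-sets with finitely many orbits and whose morphisms are ℤ-equivariant maps. The forgetful functor U : Λ∞ → FreeFinℤSet, which forgets the linear order, is a final functor in the 1-categorical sense: for every object A of FreeFinℤSet, the comma category of pairs (B, f) with B an object of Λ∞ and f : A → U(B) a morphism in FreeFinℤSet is connected (nonempty with any two objects joined by a zigzag of morphisms). -/

import Mathlib

open CategoryTheory

structure ParacyclicZSet where
  carrier : Type
  [linOrd : LinearOrder carrier]
  [addAction : AddAction ℤ carrier]
  free : ∀ (n : ℤ) (b : carrier), n +ᵥ b = b → n = 0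
  finOrbits : Finite (Quotient (AddAction.orbitRel ℤ carrier))
  lt_one_vadd : ∀ b : carrier, b < (1 : ℤ) +ᵥ b
  one_vadd_mono : Monotone (fun b : carrier => (1 : ℤ) +ᵥ b)
  cofinal : ∀ b b' : carrier, ∃ n : ℤ, b' ≤ n +ᵥ b

attribute [instance] ParacyclicZSet.linOrd ParacyclicZSet.addAction

instance : Category ParacyclicZSet where
  Hom B C := {g : B.carrier → C.carrier //
    (∀ (n : ℤ) (b : B.carrier), g (n +ᵥ b) = n +ᵥ g b) ∧ Monotone g}
  id B := ⟨id, fun _ _ => rfl, monotone_id⟩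
  comp f g := ⟨g.1 ∘ f.1, fun n b => by
      simp only [Function.comp_apply, f.2.1, g.2.1], g.2.2.comp f.2.2⟩
  id_comp f := Subtype.ext rfl
  comp_id f := Subtype.ext rfl
  assoc f g h := Subtype.ext rfl

/-- An object of the category `FreeFinℤSet`: a free `ℤ`-set with finitely many orbits. -/
structure FreeFinZSet where
  carrier : Type
  [addAction : AddAction ℤ carrier]
  free : ∀ (n : ℤ) (b : carrier), n +ᵥ b = b → n = 0
  finOrbits : Finite (Quotient (AddAction.orbitRel ℤ carrier))

attribute [instance] FreeFinZSet.addAction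

/-- Morphisms of `FreeFinℤSet` are the `ℤ`-equivariant maps. -/
instance : Category FreeFinZSet where
  Hom A B := {g : A.carrier → B.carrier //
    ∀ (n : ℤ) (a : A.carrier), g (n +ᵥ a) = n +ᵥ g a}
  id A := ⟨id, fun _ _ => rfl⟩
  comp f g := ⟨g.1 ∘ f.1, fun n a => by
    simp only [Function.comp_apply, f.2, g.2]⟩
  id_comp f := Subtype.ext rfl
  comp_id f := Subtype.ext rfl
  assoc f g h := Subtype.ext rfl

/-- The forgetful functor `U : Λ∞ → FreeFinℤSet`, forgetting the linear order. -/
def forgetOrder : ParacyclicZSet ⥤ FreeFinZSet where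
  obj B := { carrier := B.carrier, free := B.free, finOrbits := B.finOrbits }
  map g := ⟨g.1, g.2.1⟩
  map_id _ := Subtype.ext rfl
  map_comp _ _ := Subtype.ext rfl



namespace ParacyclicZSet
variable (B : ParacyclicZSet)

lemma vadd_inj (n : ℤ) : Function.Injective (fun b : B.carrier => n +ᵥ b) := by
  intro x y hxy
  have h2 : (-n) +ᵥ (n +ᵥ x) = (-n) +ᵥ (n +ᵥ y) := by
    simpa using congrArg (fun z => (-n) +ᵥ z) hxy
  rw [← add_vadd, ← add_vadd, neg_add_cancel, zero_vadd, zero_vadd] at h2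
  exact h2

lemma monotone_natCast_vadd : ∀ (k : ℕ), Monotone (fun b : B.carrier => (k : ℤ) +ᵥ b)
  | 0 => by
      intro x y h
      simpa only [Nat.cast_zero, zero_vadd] using h
  | (k+1) => by
      intro x y h
      have h1 : (1:ℤ) +ᵥ ((k:ℤ) +ᵥ x) ≤ (1:ℤ) +ᵥ ((k:ℤ) +ᵥ y) :=
        B.one_vadd_mono (monotone_natCast_vadd k h)
      rw [← add_vadd, ← add_vadd] at h1
      have hc : ((k+1 : ℕ) : ℤ) = 1 + (k:ℤ) := by push_cast; ring
      show ((k+1 : ℕ) : ℤ) +ᵥ x ≤ ((k+1 : ℕ) : ℤ) +ᵥ y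
      rw [hc]; exact h1

lemma monotone_vadd (n : ℤ) : Monotone (fun b : B.carrier => n +ᵥ b) := by
  intro x y h
  by_contra hc
  have hlt : n +ᵥ y < n +ᵥ x := not_le.mp hc
  set m : ℕ := (-n).toNat with hm
  have hmn : (m:ℤ) + n = (((m:ℤ)+n).toNat : ℤ) := by omega
  have h1 : (m:ℤ) +ᵥ (n +ᵥ y) ≤ (m:ℤ) +ᵥ (n +ᵥ x) := B.monotone_natCast_vadd m hlt.le
  rw [← add_vadd, ← add_vadd, hmn] at h1
  have h2 : ((((m:ℤ)+n).toNat:ℤ)) +ᵥ x ≤ ((((m:ℤ)+n).toNat:ℤ)) +ᵥ y :=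
    B.monotone_natCast_vadd _ h
  have h3 : ((((m:ℤ)+n).toNat:ℤ)) +ᵥ x = ((((m:ℤ)+n).toNat:ℤ)) +ᵥ y := le_antisymm h2 h1
  have hxy := B.vadd_inj _ h3
  rw [hxy] at hlt
  exact lt_irrefl _ hlt

lemma strictMono_vadd_int (b : B.carrier) : StrictMono (fun n : ℤ => n +ᵥ b) := by
  apply strictMono_int_of_lt_succ
  intro n
  have h1 : (n + 1) +ᵥ b = (1:ℤ) +ᵥ (n +ᵥ b) := by rw [← add_vadd, add_comm]
  show n +ᵥ b < (n+1) +ᵥ b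
  rw [h1]
  exact B.lt_one_vadd _

/-- The abstract "floor" map to `ℤ`. -/
lemma exists_floor :
    ∃ g : B.carrier → ℤ, (∀ (n : ℤ) (b : B.carrier), g (n +ᵥ b) = g b + n) ∧ Monotone g := by
  rcases isEmpty_or_nonempty B.carrier with h | h
  · exact ⟨fun b => (h.false b).elim, fun n b => (h.false b).elim, fun b b' _ => (h.false b).elim⟩
  obtain ⟨b₀⟩ := h
  have hex : ∀ b : B.carrier, ∃ m : ℤ, (m +ᵥ b₀ ≤ b) ∧ ∀ z : ℤ, z +ᵥ b₀ ≤ b → z ≤ m := by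
    intro b
    obtain ⟨n, hn⟩ := B.cofinal b₀ b
    obtain ⟨n', hn'⟩ := B.cofinal b b₀
    have hbdd : ∃ c : ℤ, ∀ z : ℤ, z +ᵥ b₀ ≤ b → z ≤ c := by
      refine ⟨n, fun z hz => ?_⟩
      exact ((B.strictMono_vadd_int b₀).le_iff_le).mp (hz.trans hn)
    have hinh : ∃ z : ℤ, z +ᵥ b₀ ≤ b := by
      refine ⟨-n', ?_⟩
      have h1 : (-n') +ᵥ b₀ ≤ (-n') +ᵥ (n' +ᵥ b) := B.monotone_vadd (-n') hn'
      rw [← add_vadd, neg_add_cancel, zero_vadd] at h1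
      exact h1
    obtain ⟨ub, hub1, hub2⟩ := Int.exists_greatest_of_bdd hbdd hinh
    exact ⟨ub, hub1, hub2⟩
  choose g hg1 hg2 using hex
  refine ⟨g, ?_, ?_⟩
  · intro n b
    have h1 : g b + n ≤ g (n +ᵥ b) := by
      apply hg2
      have h2 : n +ᵥ (g b +ᵥ b₀) ≤ n +ᵥ b := B.monotone_vadd n (hg1 b)
      rw [← add_vadd] at h2
      have h3 : g b + n = n + g b := by ring
      rw [h3]
      exact h2
    have h2 : g (n +ᵥ b) - n ≤ g b := by
      apply hg2
      have h4 : (-n) +ᵥ (g (n +ᵥ b) +ᵥ b₀) ≤ (-n) +ᵥ (n +ᵥ b) := B.monotone_vadd (-n) (hg1 (n +ᵥ b))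
      rw [← add_vadd, ← add_vadd, neg_add_cancel, zero_vadd] at h4
      have h5 : g (n +ᵥ b) - n = -n + g (n +ᵥ b) := by ring
      rw [h5]
      exact h4
    omega
  · intro b b' hbb'
    exact hg2 b' (g b) ((hg1 b).trans hbb')

end ParacyclicZSet


/-- The `ℤ`-action on `ℤ` where `n` acts by translation by `n * k`. -/
def zaction (k : ℤ) : AddAction ℤ ℤ where
  vadd n x := x + n * k
  zero_vadd x := by show x + 0 * k = x; ring
  add_vadd m n x := by show x + (m + n) * k = (x + n * k) + m * k; ring

lemma zaction_vadd (k n x : ℤ) : (@VAdd.vadd ℤ ℤ (zaction k).toVAdd n x) = x + n * k := rfl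

lemma finOrbits_zaction (k : ℤ) (hk : 0 < k) :
    Finite (Quotient (@AddAction.orbitRel ℤ ℤ _ (zaction k))) := by
  haveI : NeZero k.toNat := ⟨by omega⟩
  have hknn : ((k.toNat : ℤ)) = k := by omega
  have wd : ∀ x y : ℤ, (@AddAction.orbitRel ℤ ℤ _ (zaction k)).r x y →
      ((x : ZMod k.toNat)) = ((y : ZMod k.toNat)) := by
    intro x y hxy
    obtain ⟨n, hn⟩ := hxy
    have hn' : y + n * k = x := hn
    rw [← hn']
    push_cast
    rw [show ((k : ZMod k.toNat)) = ((k.toNat : ℤ) : ZMod k.toNat) by rw [hknn]]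
    push_cast
    simp [ZMod.natCast_self]
  apply Finite.of_injective (Quotient.lift (fun x : ℤ => ((x : ZMod k.toNat))) wd)
  intro q q'
  induction q using Quotient.inductionOn with | _ x =>
  induction q' using Quotient.inductionOn with | _ y =>
  intro hxy
  have hxy' : (x : ZMod k.toNat) = (y : ZMod k.toNat) := hxy
  have hmod := (ZMod.intCast_eq_intCast_iff x y k.toNat).mp hxy'
  obtain ⟨t, ht⟩ := hmod.dvd
  apply Quotient.sound
  refine ⟨-t, ?_⟩
  show y + (-t) * k = x
  rw [← hknn]
  linarith [ht]

/-- The standard paracyclic object: `ℤ` with the action of `n` by `+ n*k`. -/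
def zObj (k : ℤ) (hk : 0 < k) : ParacyclicZSet where
  carrier := ℤ
  addAction := zaction k
  free := by
    intro n x h
    have h' : x + n * k = x := h
    have h2 : n * k = 0 := by linarith
    rcases mul_eq_zero.mp h2 with h3 | h3
    · exact h3
    · omega
  finOrbits := finOrbits_zaction k hk
  lt_one_vadd := by
    intro b
    show b < b + 1 * k
    omega
  one_vadd_mono := by
    intro x y h
    show x + 1 * k ≤ y + 1 * k
    have h' : (x : ℤ) ≤ y := h
    omega
  cofinal := by
    intro b b'
    refine ⟨max (b' - b) 0, ?_⟩
    show b' ≤ b + max (b' - b) 0 * k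
    have h1 : max (b' - b) 0 * 1 ≤ max (b' - b) 0 * k :=
      mul_le_mul_of_nonneg_left (by omega) (le_max_right _ _)
    have h2 := le_max_left (b' - b) (0:ℤ)
    omega

section CommaMachinery

/-- Cancellation for free actions. -/
lemma vadd_cancel_of_free {α : Type} [AddAction ℤ α]
    (hfree : ∀ (n : ℤ) (b : α), n +ᵥ b = b → n = 0)
    {n m : ℤ} {x : α} (h : n +ᵥ x = m +ᵥ x) : n = m := by
  have h2 : (n - m) +ᵥ (m +ᵥ x) = m +ᵥ x := by
    rw [← add_vadd, show n - m + m = n by ring]; exact h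
  have := hfree _ _ h2
  omega

/-- Build an equivariant map into `zObj k hk` from an integer-valued function. -/
def mkHom {A : FreeFinZSet} (k : ℤ) (hk : 0 < k) (h : A.carrier → ℤ)
    (he : ∀ (n : ℤ) (a : A.carrier), h (n +ᵥ a) = h a + n * k) :
    A ⟶ forgetOrder.obj (zObj k hk) :=
  ⟨h, he⟩

/-- The underlying integer value of an equivariant map into `zObj k hk`. -/
def hval {A : FreeFinZSet} {k : ℤ} {hk : 0 < k}
    (h : A ⟶ forgetOrder.obj (zObj k hk)) (a : A.carrier) : ℤ :=
  h.1 a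

/-- The underlying integer of an element of `zObj k hk`. -/
def vi {k : ℤ} {hk : 0 < k} (x : (zObj k hk).carrier) : ℤ := x

lemma hom_val_vadd {A : FreeFinZSet} {k : ℤ} {hk : 0 < k}
    (h : A ⟶ forgetOrder.obj (zObj k hk)) (n : ℤ) (a : A.carrier) :
    hval h (n +ᵥ a) = hval h a + n * k :=
  h.2 n a

/-- Division by two, with an offset, as a morphism of paracyclic `ℤ`-sets. -/
def divHom (t : ℤ) : zObj 2 two_pos ⟶ zObj 1 one_pos :=
  ⟨fun x => (((vi x + t) / 2 : ℤ) : (zObj 1 one_pos).carrier),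
   fun n x => by
     show (vi x + n * 2 + t) / 2 = (vi x + t) / 2 + n * 1
     omega,
   by
     intro x y hxy
     show (vi x + t) / 2 ≤ (vi y + t) / 2
     have h' : vi x ≤ vi y := hxy
     omega⟩

open CategoryTheory in
/-- One span: if `h'` differs from `h` by an invariant `{-1,0}`-valued function, the
corresponding structured arrows are connected by a zigzag. -/
lemma zigzag_step {A : FreeFinZSet} (h h' : A ⟶ forgetOrder.obj (zObj 1 one_pos))
    (hd : ∀ a, hval h' a = hval h a ∨ hval h' a = hval h a - 1) :
    Zigzag (StructuredArrow.mk h) (StructuredArrow.mk h') := by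
  classical
  have hcinv : ∀ (n : ℤ) (a : A.carrier),
      (if hval h' (n +ᵥ a) = hval h (n +ᵥ a) then (1:ℤ) else 0)
        = (if hval h' a = hval h a then (1:ℤ) else 0) := by
    intro n a
    have h1 := hom_val_vadd h n a
    have h2 := hom_val_vadd h' n a
    by_cases hc : hval h' a = hval h a
    · rw [if_pos hc, if_pos (by omega)]
    · rw [if_neg hc, if_neg (by omega)]
  have he : ∀ (n : ℤ) (a : A.carrier),
      (2 * hval h (n +ᵥ a) + (if hval h' (n +ᵥ a) = hval h (n +ᵥ a) then (1:ℤ) else 0))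
        = (2 * hval h a + (if hval h' a = hval h a then (1:ℤ) else 0)) + n * 2 := by
    intro n a
    rw [hcinv n a, hom_val_vadd h n a]
    ring
  let e : A ⟶ forgetOrder.obj (zObj 2 two_pos) :=
    mkHom 2 two_pos
      (fun a => 2 * hval h a + (if hval h' a = hval h a then (1:ℤ) else 0)) he
  have hψ : e ≫ forgetOrder.map (divHom 0) = h := by
    apply Subtype.ext; funext a
    show (2 * hval h a + (if hval h' a = hval h a then (1:ℤ) else 0) + 0) / 2 = hval h a
    split_ifs <;> omega
  have hψ' : e ≫ forgetOrder.map (divHom (-1)) = h' := by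
    apply Subtype.ext; funext a
    show (2 * hval h a + (if hval h' a = hval h a then (1:ℤ) else 0) + (-1)) / 2 = hval h' a
    rcases hd a with hc | hc <;> split_ifs <;> omega
  refine Relation.ReflTransGen.head (b := StructuredArrow.mk e) ?_ (Relation.ReflTransGen.single ?_)
  · exact Or.inr ⟨StructuredArrow.homMk (divHom 0) hψ⟩
  · exact Or.inl ⟨StructuredArrow.homMk (divHom (-1)) hψ'⟩

open CategoryTheory in
lemma zigzag_bound {A : FreeFinZSet} :
    ∀ (M : ℕ) (h h' : A ⟶ forgetOrder.obj (zObj 1 one_pos)),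
      (∀ a, |hval h' a - hval h a| ≤ (M : ℤ)) →
      Zigzag (StructuredArrow.mk h) (StructuredArrow.mk h') := by
  intro M
  induction M with
  | zero =>
    intro h h' hb
    have heq : h = h' := by
      apply Subtype.ext; funext a
      have h1 := abs_le.mp (hb a)
      show hval h a = hval h' a
      omega
    rw [heq]
  | succ M ih =>
    intro h h' hb
    classical
    have e1 : ∀ (n : ℤ) (a : A.carrier),
        (if hval h' (n +ᵥ a) < hval h (n +ᵥ a) then hval h (n +ᵥ a) - 1 else hval h (n +ᵥ a))
          = (if hval h' a < hval h a then hval h a - 1 else hval h a) + n * 1 := by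
      intro n a
      have h1 := hom_val_vadd h n a
      have h2 := hom_val_vadd h' n a
      by_cases hc : hval h' a < hval h a
      · rw [if_pos hc, if_pos (by omega)]; omega
      · rw [if_neg hc, if_neg (by omega)]; omega
    let h₁ := mkHom 1 one_pos
      (fun a => if hval h' a < hval h a then hval h a - 1 else hval h a) e1
    have hv1 : ∀ a, hval h₁ a
        = if hval h' a < hval h a then hval h a - 1 else hval h a := fun a => rfl
    have e2 : ∀ (n : ℤ) (a : A.carrier),
        (if hval h₁ (n +ᵥ a) < hval h' (n +ᵥ a) then hval h₁ (n +ᵥ a) + 1 else hval h₁ (n +ᵥ a))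
          = (if hval h₁ a < hval h' a then hval h₁ a + 1 else hval h₁ a) + n * 1 := by
      intro n a
      have h1 := hom_val_vadd h₁ n a
      have h2 := hom_val_vadd h' n a
      by_cases hc : hval h₁ a < hval h' a
      · rw [if_pos hc, if_pos (by omega)]; omega
      · rw [if_neg hc, if_neg (by omega)]; omega
    let h₂ := mkHom 1 one_pos
      (fun a => if hval h₁ a < hval h' a then hval h₁ a + 1 else hval h₁ a) e2
    have hv2 : ∀ a, hval h₂ a
        = if hval h₁ a < hval h' a then hval h₁ a + 1 else hval h₁ a := fun a => rfl
    have s1 : Zigzag (StructuredArrow.mk h) (StructuredArrow.mk h₁) := by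
      apply zigzag_step
      intro a
      rw [hv1 a]
      split_ifs <;> omega
    have s2 : Zigzag (StructuredArrow.mk h₂) (StructuredArrow.mk h₁) := by
      apply zigzag_step
      intro a
      rw [hv2 a]
      split_ifs <;> omega
    have s3 : Zigzag (StructuredArrow.mk h₂) (StructuredArrow.mk h') := by
      apply ih
      intro a
      have h1 := abs_le.mp (hb a)
      rw [abs_le, hv2 a, hv1 a]
      push_cast at h1 ⊢
      split_ifs <;> omega
    exact s1.trans ((Zigzag.symm s2).trans s3)

open CategoryTheory in
lemma zigzag_main {A : FreeFinZSet} (h h' : A ⟶ forgetOrder.obj (zObj 1 one_pos)) :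
    Zigzag (StructuredArrow.mk h) (StructuredArrow.mk h') := by
  haveI := A.finOrbits
  have wd : ∀ x y : A.carrier, (AddAction.orbitRel ℤ A.carrier).r x y →
      |hval h' x - hval h x| = |hval h' y - hval h y| := by
    intro x y hxy
    have hxy' : x ∈ AddAction.orbit ℤ y := hxy
    obtain ⟨n, hn⟩ := AddAction.mem_orbit_iff.mp hxy'
    rw [← hn, hom_val_vadd h n y, hom_val_vadd h' n y]
    congr 1
    ring
  obtain ⟨M, hM⟩ := Finite.exists_le
    (Quotient.lift (fun a : A.carrier => |hval h' a - hval h a|) wd)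
  apply zigzag_bound M.toNat h h'
  intro a
  have h2 : |hval h' a - hval h a| ≤ M :=
    hM (Quotient.mk (AddAction.orbitRel ℤ A.carrier) a)
  have h3 := abs_nonneg (hval h' a - hval h a)
  have h4 := abs_le.mp h2
  rw [abs_le]
  omega

lemma exists_equivariant_to_int (A : FreeFinZSet) :
    ∃ f : A.carrier → ℤ, ∀ (n : ℤ) (a : A.carrier), f (n +ᵥ a) = f a + n * 1 := by
  have hrep : ∀ a : A.carrier,
      ∃ n : ℤ, n +ᵥ (Quotient.mk (AddAction.orbitRel ℤ A.carrier) a).out = a := by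
    intro a
    have h0 := Quotient.mk_out (s := AddAction.orbitRel ℤ A.carrier) a
    have h1 : (Quotient.mk (AddAction.orbitRel ℤ A.carrier) a).out
        ∈ AddAction.orbit ℤ a := h0
    obtain ⟨n, hn⟩ := AddAction.mem_orbit_iff.mp h1
    refine ⟨-n, ?_⟩
    rw [← hn, ← add_vadd, neg_add_cancel, zero_vadd]
  choose f hf using hrep
  refine ⟨f, fun n a => ?_⟩
  have hq : (Quotient.mk (AddAction.orbitRel ℤ A.carrier) (n +ᵥ a))
      = Quotient.mk (AddAction.orbitRel ℤ A.carrier) a :=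
    Quotient.sound (AddAction.mem_orbit a n)
  have h1 := hf (n +ᵥ a)
  rw [hq] at h1
  have h2 : (f a + n * 1) +ᵥ (Quotient.mk (AddAction.orbitRel ℤ A.carrier) a).out = n +ᵥ a := by
    rw [show f a + n * 1 = n + f a by ring, add_vadd, hf a]
  exact vadd_cancel_of_free A.free (h1.trans h2.symm)

open CategoryTheory in
/-- The floor morphism from any paracyclic `ℤ`-set to the standard one. -/
noncomputable def floorHom (B : ParacyclicZSet) : B ⟶ zObj 1 one_pos :=
  ⟨fun b => ((B.exists_floor.choose b : ℤ) : (zObj 1 one_pos).carrier),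
   fun n b => by
     show B.exists_floor.choose (n +ᵥ b) = B.exists_floor.choose b + n * 1
     rw [B.exists_floor.choose_spec.1 n b]; ring,
   by
     intro x y hxy
     show B.exists_floor.choose x ≤ B.exists_floor.choose y
     exact B.exists_floor.choose_spec.2 hxy⟩

end CommaMachinery

/-- The forgetful functor `U : Λ∞ → FreeFinℤSet` is a final functor in the 1-categorical
sense: for every free `ℤ`-set `A` with finitely many orbits, the comma category of pairs
`(B, f)` with `B` in `Λ∞` and `f : A → U(B)` `ℤ`-equivariant is connected. -/
theorem forgetOrder_final : forgetOrder.Final := by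
  constructor
  intro A
  obtain ⟨f₀, hf₀⟩ := exists_equivariant_to_int A
  haveI : Nonempty (StructuredArrow A forgetOrder) :=
    ⟨StructuredArrow.mk (mkHom 1 one_pos f₀ hf₀)⟩
  apply zigzag_isConnected
  intro X Y
  have zX : Zag X (StructuredArrow.mk (X.hom ≫ forgetOrder.map (floorHom X.right))) :=
    Or.inl ⟨StructuredArrow.homMk (floorHom X.right) rfl⟩
  have zY : Zag (StructuredArrow.mk (Y.hom ≫ forgetOrder.map (floorHom Y.right))) Y :=
    Or.inr ⟨StructuredArrow.homMk (floorHom Y.right) rfl⟩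
  exact Relation.ReflTransGen.head zX
    ((zigzag_main _ _).trans (Relation.ReflTransGen.single zY))
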